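/- For every integer D ≥ 1, the coefficients of t, t², t³ and t⁴ in the formal power series P_B(t)·Q_B(t) ∈ ℚ[[t]] are all zero, where P_B(t) = (1−t)^{−D}·(1−t²)^{−D(D−1)/2} and Q_B(t) = 1 − D t + (1/3)D(D²−1) t³ − (1/12)D²(D²−1) t⁴. -/

import Mathlib

open PowerSeries

/-- The Poincaré series of the parafermionic algebra with `D` degrees of freedom,
`P_B(t) = (1-t)^{-D} (1-t²)^{-D(D-1)/2}`, as a formal power series over `ℚ`. -/
noncomputable def parafermionicPoincareSeries (D : ℕ) : PowerSeries ℚ :=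
  ((1 - PowerSeries.X : PowerSeries ℚ)⁻¹) ^ D *
    ((1 - PowerSeries.X ^ 2 : PowerSeries ℚ)⁻¹) ^ (D * (D - 1) / 2)

/-- The series `Q_B(t) = 1 - D t + (1/3) D (D²-1) t³ - (1/12) D² (D²-1) t⁴` built from the
dimensions of the homogeneous components of the dual cubic algebra `B^!`. -/
noncomputable def parafermionicDualSeries (D : ℕ) : PowerSeries ℚ :=
  1 - PowerSeries.C (D : ℚ) * PowerSeries.X
    + PowerSeries.C ((D : ℚ) * ((D : ℚ) ^ 2 - 1) / 3) * PowerSeries.X ^ 3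
    - PowerSeries.C ((D : ℚ) ^ 2 * ((D : ℚ) ^ 2 - 1) / 12) * PowerSeries.X ^ 4

lemma one_sub_X_inv : ((1 - X : PowerSeries ℚ)⁻¹) = mk 1 := by
  rw [PowerSeries.inv_eq_iff_mul_eq_one]
  · exact mk_one_mul_one_sub_eq_one ℚ
  · simp

lemma one_add_X_mul : (1 + X : PowerSeries ℚ) * (mk fun n => (-1 : ℚ) ^ n) = 1 := by
  ext n
  cases n with
  | zero => simp
  | succ n =>
      rw [add_mul, one_mul, map_add, coeff_succ_X_mul, coeff_mk, coeff_mk, pow_succ]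
      simp

lemma one_sub_X_sq_inv :
    ((1 - X ^ 2 : PowerSeries ℚ)⁻¹) = mk 1 * mk fun n => (-1 : ℚ) ^ n := by
  rw [PowerSeries.inv_eq_iff_mul_eq_one]
  · calc (mk 1 * mk fun n => (-1 : ℚ) ^ n) * (1 - X ^ 2)
        = (mk 1 * (1 - X)) * ((1 + X) * mk fun n => (-1 : ℚ) ^ n) := by ring
      _ = 1 := by rw [mk_one_mul_one_sub_eq_one, one_add_X_mul, one_mul]
  · simp

lemma neg_pow_mk_eq : (mk fun n => (-1 : ℚ) ^ n) = rescale (-1) (mk 1) := by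
  ext n
  simp [coeff_rescale]

lemma neg_pow_mk_pow (k : ℕ) :
    (mk fun n => (-1 : ℚ) ^ n) ^ (k + 1)
      = mk fun n => (-1 : ℚ) ^ n * ((k + n).choose k : ℚ) := by
  rw [neg_pow_mk_eq, ← map_pow, mk_one_pow_eq_mk_choose_add]
  ext n
  simp [coeff_rescale]

lemma cast_choose_two' (y : ℕ) : (((y + 2).choose 2 : ℕ) : ℚ) = (y + 1) * (y + 2) / 2 := by
  induction y with
  | zero => norm_num
  | succ y ih =>
      rw [show y + 1 + 2 = (y + 2) + 1 from rfl, show (2 : ℕ) = 1 + 1 from rfl,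
        Nat.choose_succ_succ']
      push_cast [ih, Nat.choose_one_right]
      ring

lemma cast_choose_three' (y : ℕ) :
    (((y + 3).choose 3 : ℕ) : ℚ) = (y + 1) * (y + 2) * (y + 3) / 6 := by
  induction y with
  | zero => norm_num
  | succ y ih =>
      rw [show y + 1 + 3 = (y + 3) + 1 from rfl, show (3 : ℕ) = 2 + 1 from rfl,
        Nat.choose_succ_succ']
      push_cast [ih, cast_choose_two' (y + 1)]
      ring

lemma cast_choose_four' (y : ℕ) :
    (((y + 4).choose 4 : ℕ) : ℚ) = (y + 1) * (y + 2) * (y + 3) * (y + 4) / 24 := by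
  induction y with
  | zero => norm_num
  | succ y ih =>
      rw [show y + 1 + 4 = (y + 4) + 1 from rfl, show (4 : ℕ) = 3 + 1 from rfl,
        Nat.choose_succ_succ']
      push_cast [ih, cast_choose_three' (y + 1)]
      ring

lemma cc1 (y : ℕ) : (((y + 1).choose y : ℕ) : ℚ) = y + 1 := by
  rw [Nat.choose_symm_add, Nat.choose_one_right]; push_cast; ring

lemma cc2 (y : ℕ) : (((y + 2).choose y : ℕ) : ℚ) = (y + 1) * (y + 2) / 2 := by
  rw [Nat.choose_symm_add, cast_choose_two']

lemma cc3 (y : ℕ) : (((y + 3).choose y : ℕ) : ℚ) = (y + 1) * (y + 2) * (y + 3) / 6 := by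
  rw [Nat.choose_symm_add, cast_choose_three']

lemma cc4 (y : ℕ) :
    (((y + 4).choose y : ℕ) : ℚ) = (y + 1) * (y + 2) * (y + 3) * (y + 4) / 24 := by
  rw [Nat.choose_symm_add, cast_choose_four']

/-- The coefficients of `t`, `t²`, `t³` and `t⁴` in `P_B(t) · Q_B(t)` all vanish. -/
theorem coeff_parafermionic_mul_eq_zero_of_le_four (D : ℕ) (hD : 1 ≤ D) :
    ∀ n : ℕ, 1 ≤ n → n ≤ 4 →
      PowerSeries.coeff n (parafermionicPoincareSeries D * parafermionicDualSeries D) = 0 := by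
  intro n hn1 hn4
  rcases Nat.lt_or_ge D 2 with hD2 | hD2
  · -- D = 1
    have h1 : D = 1 := by omega
    subst h1
    have hP : parafermionicPoincareSeries 1 = mk 1 := by
      unfold parafermionicPoincareSeries
      norm_num [one_sub_X_inv]
    rw [hP]
    interval_cases n <;>
      · rw [coeff_mul, Finset.Nat.sum_antidiagonal_eq_sum_range_succ_mk]
        simp only [parafermionicDualSeries, map_sub, map_add, coeff_one, coeff_C_mul,
          coeff_X, coeff_X_pow, coeff_mk, Pi.one_apply, Finset.sum_range_succ,
          Finset.sum_range_zero]
        norm_num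
  · obtain ⟨d, rfl⟩ : ∃ d, D = d + 2 := ⟨D - 2, by omega⟩
    have hdvd : 2 ∣ (d + 2) * (d + 1) := by
      rcases Nat.even_or_odd d with ⟨t, ht⟩ | ⟨t, ht⟩ <;> subst ht
      · exact ⟨(t + 1) * (2 * t + 1), by ring⟩
      · exact ⟨(2 * t + 3) * (t + 1), by ring⟩
    have hq : (d + 2) * (d + 1) / 2 * 2 = (d + 2) * (d + 1) := Nat.div_mul_cancel hdvd
    have hge : 1 ≤ (d + 2) * (d + 1) / 2 :=
      (Nat.one_le_div_iff two_pos).mpr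
        (by calc (2:ℕ) = 2 * 1 := rfl
              _ ≤ (d + 2) * (d + 1) := Nat.mul_le_mul (by omega) (by omega))
    obtain ⟨e, he⟩ : ∃ e, (d + 2) * (d + 1) / 2 = e + 1 :=
      ⟨(d + 2) * (d + 1) / 2 - 1, (Nat.succ_pred_eq_of_pos hge).symm⟩
    have hec : ((e : ℚ) + 1) * 2 = ((d : ℚ) + 2) * ((d : ℚ) + 1) := by
      rw [he] at hq
      exact_mod_cast hq
    have hP : parafermionicPoincareSeries (d + 2)
        = (mk fun n => (((d + e + 2) + n).choose (d + e + 2) : ℚ))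
          * mk fun n => (-1 : ℚ) ^ n * ((e + n).choose e : ℚ) := by
      unfold parafermionicPoincareSeries
      rw [one_sub_X_inv, one_sub_X_sq_inv, show (d + 2) - 1 = d + 1 from rfl, he,
        mul_pow, ← mul_assoc, ← pow_add, show d + 2 + (e + 1) = (d + e + 2) + 1 from by omega,
        mk_one_pow_eq_mk_choose_add, neg_pow_mk_pow]
    have heQ : (e : ℚ) = ((d : ℚ) ^ 2 + 3 * (d : ℚ)) / 2 := by linear_combination hec / 2
    rw [hP, mul_assoc]
    interval_cases n <;>
      · rw [coeff_mul, Finset.Nat.sum_antidiagonal_eq_sum_range_succ_mk]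
        simp only [coeff_mul, Finset.Nat.sum_antidiagonal_eq_sum_range_succ_mk,
          Finset.sum_range_succ, Finset.sum_range_zero, coeff_mk,
          parafermionicDualSeries, map_sub, map_add, coeff_one, coeff_C_mul, coeff_C,
          coeff_X, coeff_X_pow, Pi.one_apply, Nat.reduceAdd, Nat.reduceSub, reduceIte,
          add_zero, Nat.choose_self, cc1, cc2, cc3, cc4]
        norm_num
        rw [heQ]
        ring
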